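/- For the cycle graph C_n: if n = 3 or n ≥ 5, then MEG(C_n) = 3, and MEG(C_4) = 4. -/

import Mathlib

open SimpleGraph

/-- Two vertices `x` and `y` monitor an edge `e` in `G`: there is a shortest path between
them, and `e` lies on every shortest path between `x` and `y`. -/
def Monitors {V : Type*} (G : SimpleGraph V) (x y : V) (e : Sym2 V) : Prop :=
  (∃ p : G.Walk x y, p.IsPath ∧ p.length = G.dist x y) ∧
    ∀ p : G.Walk x y, p.IsPath → p.length = G.dist x y → e ∈ p.edges

/-- `S` is a monitoring edge-geodetic set of `G`. -/
def IsMEGSet {V : Type*} (G : SimpleGraph V) (S : Set V) : Prop :=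
  ∀ e ∈ G.edgeSet, ∃ x ∈ S, ∃ y ∈ S, Monitors G x y e

/-- The minimum size of a monitoring edge-geodetic set of `G`. -/
noncomputable def megNum {V : Type*} (G : SimpleGraph V) : ℕ :=
  sInf {n | ∃ S : Set V, IsMEGSet G S ∧ S.ncard = n}

/-- The set of leaves (degree-1 vertices) of `G`. -/
def leaves {V : Type*} (G : SimpleGraph V) : Set V :=
  {v | (G.neighborSet v).ncard = 1}


namespace MEGAux

open SimpleGraph Walk List
open scoped Fin.NatCast Fin.CommRing

variable {m : ℕ}

lemma adj_iff {u v : Fin (m+3)} : (cycleGraph (m+3)).Adj u v ↔ u = v + 1 ∨ v = u + 1 := by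
  rw [cycleGraph_adj']
  have h1 : ((1 : Fin (m+3)) : ℕ) = 1 := rfl
  constructor
  · rintro (h | h)
    · left
      have : u - v = 1 := Fin.ext (by rw [h, h1])
      rw [← this]; ring
    · right
      have : v - u = 1 := Fin.ext (by rw [h, h1])
      rw [← this]; ring
  · rintro (h | h)
    · left
      rw [h, show v + 1 - v = 1 by ring, h1]
    · right
      rw [h, show u + 1 - u = 1 by ring, h1]

lemma adj_succ (x : Fin (m+3)) : (cycleGraph (m+3)).Adj x (x+1) :=
  adj_iff.mpr (Or.inr rfl)

lemma exists_plusWalk (d : ℕ) (x : Fin (m+3)) :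
    ∃ p : (cycleGraph (m+3)).Walk x (x + (d : Fin (m+3))),
      p.length = d ∧
      p.support = (List.range (d+1)).map (fun (i : ℕ) => x + (i : Fin (m+3))) ∧
      p.edges = (List.range d).map
        (fun (i : ℕ) => s(x + (i : Fin (m+3)), x + (i : Fin (m+3)) + 1)) := by
  induction d generalizing x with
  | zero =>
    refine ⟨Walk.nil.copy rfl (by simp), ?_, ?_, ?_⟩ <;> simp [List.range_succ]
  | succ d ih =>
    obtain ⟨q, hq1, hq2, hq3⟩ := ih (x + 1)
    have he : (x + 1) + (d : Fin (m+3)) = x + ((d+1 : ℕ) : Fin (m+3)) := by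
      push_cast; ring
    have hsup : (List.range (d+1+1)).map (fun (i : ℕ) => x + (i : Fin (m+3)))
        = x :: (List.range (d+1)).map (fun (i : ℕ) => x + 1 + (i : Fin (m+3))) := by
      rw [List.range_succ_eq_map, List.map_cons, List.map_map]
      congr 1
      · simp
      · apply List.map_congr_left
        intro i _
        simp only [Function.comp_apply, Nat.succ_eq_add_one]
        push_cast; ring
    have hedg : (List.range (d+1)).map
          (fun (i : ℕ) => s(x + (i : Fin (m+3)), x + (i : Fin (m+3)) + 1))
        = s(x, x+1) :: (List.range d).map
          (fun (i : ℕ) => s(x + 1 + (i : Fin (m+3)), x + 1 + (i : Fin (m+3)) + 1)) := by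
      rw [List.range_succ_eq_map, List.map_cons, List.map_map]
      congr 1
      · simp
      · apply List.map_congr_left
        intro i _
        simp only [Function.comp_apply, Nat.succ_eq_add_one]
        congr 1 <;> (push_cast; ring)
    refine ⟨(Walk.cons (adj_succ x) q).copy rfl he, ?_, ?_, ?_⟩
    · simp [hq1]
    · rw [Walk.support_copy, Walk.support_cons, hq2, hsup]
    · rw [Walk.edges_copy, Walk.edges_cons, hq3, hedg]

lemma exists_plusPath {d : ℕ} (hd : d < m + 3) (x : Fin (m+3)) :
    ∃ p : (cycleGraph (m+3)).Walk x (x + (d : Fin (m+3))),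
      p.IsPath ∧ p.length = d ∧
      p.edges = (List.range d).map
        (fun (i : ℕ) => s(x + (i : Fin (m+3)), x + (i : Fin (m+3)) + 1)) := by
  obtain ⟨p, h1, h2, h3⟩ := exists_plusWalk d x
  refine ⟨p, ?_, h1, h3⟩
  rw [Walk.isPath_def, h2]
  refine List.Nodup.map_on ?_ List.nodup_range
  intro i hi j hj hij
  rw [List.mem_range] at hi hj
  have : ((i : Fin (m+3)) : ℕ) = ((j : Fin (m+3)) : ℕ) := by
    rw [add_right_injective x hij]
  rwa [Fin.val_cast_of_lt (by omega), Fin.val_cast_of_lt (by omega)] at this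

def IsPlus {x y : Fin (m+3)} (p : (cycleGraph (m+3)).Walk x y) : Prop :=
  ∀ d ∈ p.darts, d.snd = d.fst + 1

def IsMinus {x y : Fin (m+3)} (p : (cycleGraph (m+3)).Walk x y) : Prop :=
  ∀ d ∈ p.darts, d.fst = d.snd + 1

lemma path_dir {x y : Fin (m+3)} (p : (cycleGraph (m+3)).Walk x y) (hp : p.IsPath) :
    IsPlus p ∨ IsMinus p := by
  induction p with
  | nil => left; intro d hd; simp [Walk.darts_nil] at hd
  | @cons x z y h q ih =>
    rw [Walk.cons_isPath_iff] at hp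
    obtain ⟨hq, hxs⟩ := hp
    rcases adj_iff.mp h with h1 | h1
    · -- x = z + 1 : minus step
      right
      intro d hd
      rw [Walk.darts_cons, List.mem_cons] at hd
      rcases hd with rfl | hd
      · exact h1
      · rcases ih hq with hpl | hmn
        · -- q is plus; show q has no darts
          exfalso
          cases q with
          | nil => simp [Walk.darts_nil] at hd
          | cons h2 q2 =>
            have := hpl _ (by rw [Walk.darts_cons]; exact List.mem_cons_self)
            simp only [Walk.darts_cons] at this
            -- this : (second vertex) = z + 1 = x
            rw [← h1] at this
            apply hxs
            rw [Walk.support_cons]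
            exact List.mem_cons_of_mem _ (this ▸ Walk.start_mem_support _)
        · exact hmn d hd
    · -- z = x + 1 : plus step
      left
      intro d hd
      rw [Walk.darts_cons, List.mem_cons] at hd
      rcases hd with rfl | hd
      · exact h1
      · rcases ih hq with hpl | hmn
        · exact hpl d hd
        · exfalso
          cases q with
          | nil => simp [Walk.darts_nil] at hd
          | @cons _ w _ h2 q2 =>
            have hzw := hmn _ (by rw [Walk.darts_cons]; exact List.mem_cons_self)
            simp only [Walk.darts_cons] at hzw
            have hw : w = x := by
              have h3 : x + 1 = w + 1 := h1 ▸ hzw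
              exact (add_right_cancel h3).symm
            apply hxs
            rw [Walk.support_cons]
            exact List.mem_cons_of_mem _ (hw ▸ Walk.start_mem_support _)

lemma isPlus_spec {x y : Fin (m+3)} (p : (cycleGraph (m+3)).Walk x y) (hp : IsPlus p) :
    y = x + (p.length : Fin (m+3)) ∧
      ∀ i < p.length, s(x + (i : Fin (m+3)), x + (i : Fin (m+3)) + 1) ∈ p.edges := by
  induction p with
  | nil => simp
  | @cons x z y h q ih =>
    have hz : z = x + 1 := hp _ (by rw [Walk.darts_cons]; exact List.mem_cons_self)
    have hq : IsPlus q := fun d hd => hp d (by rw [Walk.darts_cons]; exact List.mem_cons_of_mem _ hd)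
    obtain ⟨ih1, ih2⟩ := ih hq
    obtain ⟨L, hL⟩ : ∃ L, q.length = L := ⟨_, rfl⟩
    constructor
    · rw [Walk.length_cons, hL]
      rw [hL] at ih1
      rw [ih1, hz]
      push_cast; ring
    · intro i hi
      rw [Walk.length_cons] at hi
      rw [Walk.edges_cons]
      match i with
      | 0 =>
        apply List.mem_cons.mpr; left
        rw [hz]; norm_num
      | (j+1) =>
        have hj := ih2 j (by omega)
        have h1 : x + ((j+1 : ℕ) : Fin (m+3)) = z + (j : Fin (m+3)) := by
          rw [hz]; push_cast; ring
        have he : s(x + ((j+1 : ℕ) : Fin (m+3)), x + ((j+1 : ℕ) : Fin (m+3)) + 1)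
            = s(z + (j : Fin (m+3)), z + (j : Fin (m+3)) + 1) := by rw [h1]
        rw [he]
        exact List.mem_cons.mpr (Or.inr hj)

lemma isMinus_reverse {x y : Fin (m+3)} (p : (cycleGraph (m+3)).Walk x y) (hp : IsMinus p) :
    IsPlus p.reverse := by
  intro d hd
  rw [Walk.darts_reverse, List.mem_reverse, List.mem_map] at hd
  obtain ⟨d', hd', rfl⟩ := hd
  exact hp d' hd'

lemma path_length_eq {x y : Fin (m+3)} (p : (cycleGraph (m+3)).Walk x y) (hp : p.IsPath) :
    p.length = (y - x).val ∨ p.length = (x - y).val := by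
  have hlt : p.length < m + 3 := by
    have := hp.length_lt
    rwa [Fintype.card_fin] at this
  rcases path_dir p hp with h | h
  · left
    have h1 := (isPlus_spec p h).1
    have h2 : y - x = (p.length : Fin (m+3)) := by
      have h3 := congrArg (fun t => t - x) h1
      simpa using h3
    rw [h2, Fin.val_cast_of_lt hlt]
  · right
    have h1 := (isPlus_spec p.reverse (isMinus_reverse p h)).1
    rw [Walk.length_reverse] at h1
    have h2 : x - y = (p.length : Fin (m+3)) := by
      have h3 := congrArg (fun t => t - y) h1
      simpa using h3
    rw [h2, Fin.val_cast_of_lt hlt]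

lemma exists_plusPath' (x y : Fin (m+3)) :
    ∃ p : (cycleGraph (m+3)).Walk x y,
      p.IsPath ∧ p.length = (y - x).val ∧
      p.edges = (List.range (y - x).val).map
        (fun (i : ℕ) => s(x + (i : Fin (m+3)), x + (i : Fin (m+3)) + 1)) := by
  have hd : (y - x).val < m + 3 := (y - x).isLt
  obtain ⟨p, h1, h2, h3⟩ := exists_plusPath hd x
  have he : x + (((y - x).val : ℕ) : Fin (m+3)) = y := by
    rw [Fin.cast_val_eq_self]; ring
  exact ⟨p.copy rfl he, by rwa [Walk.isPath_copy], by rwa [Walk.length_copy],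
    by rwa [Walk.edges_copy]⟩

lemma dist_le_sub (x y : Fin (m+3)) : (cycleGraph (m+3)).dist x y ≤ (y - x).val := by
  obtain ⟨p, _, h2, _⟩ := exists_plusPath' x y
  exact h2 ▸ SimpleGraph.dist_le p

lemma cg_connected : (cycleGraph (m+3)).Connected := by
  have := cycleGraph_connected (n := m + 2)
  exact this

lemma dist_eq_sub {x y : Fin (m+3)} (hle : (y - x).val ≤ (x - y).val) :
    (cycleGraph (m+3)).dist x y = (y - x).val := by
  refine le_antisymm (dist_le_sub x y) ?_
  obtain ⟨p, hp, hlen⟩ := Connected.exists_path_of_dist cg_connected x y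
  rcases path_length_eq p hp with h | h
  · omega
  · omega

/-- Any shortest path when the plus direction is (weakly) shortest gives membership in the
plus edge list. -/
lemma monitors_mem {x y : Fin (m+3)} {e : Sym2 (Fin (m+3))}
    (hle : (y - x).val ≤ (x - y).val)
    (hm : Monitors (cycleGraph (m+3)) x y e) :
    ∃ i < (y - x).val, e = s(x + (i : Fin (m+3)), x + (i : Fin (m+3)) + 1) := by
  obtain ⟨p, hp, hlen, hedg⟩ := exists_plusPath' x y
  have hdist : (cycleGraph (m+3)).dist x y = (y - x).val := dist_eq_sub hle
  have := hm.2 p hp (by rw [hlen, hdist])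
  rw [hedg, List.mem_map] at this
  obtain ⟨i, hi, hie⟩ := this
  exact ⟨i, List.mem_range.mp hi, hie.symm⟩

lemma not_monitors_self {V : Type*} (G : SimpleGraph V) (a : V) (e : Sym2 V) :
    ¬ Monitors G a a e := by
  intro h
  have := h.2 Walk.nil (Walk.IsPath.nil) (by simp [SimpleGraph.dist_self])
  simp at this

lemma monitors_symm {V : Type*} {G : SimpleGraph V} {x y : V} {e : Sym2 V}
    (h : Monitors G x y e) : Monitors G y x e := by
  obtain ⟨⟨p, hp, hlen⟩, hall⟩ := h
  refine ⟨⟨p.reverse, hp.reverse, by rw [Walk.length_reverse, hlen, SimpleGraph.dist_comm]⟩, ?_⟩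
  intro q hq hql
  have := hall q.reverse hq.reverse
    (by rw [Walk.length_reverse, hql, SimpleGraph.dist_comm])
  rwa [Walk.edges_reverse, List.mem_reverse] at this

lemma two_ne_zero' : (2 : Fin (m+3)) ≠ 0 := by
  intro h
  have hv : ((2 : Fin (m+3)) : ℕ) = 2 := by
    rw [show (2 : Fin (m+3)) = 1 + 1 by norm_num, Fin.val_add]
    rw [show ((1 : Fin (m+3)) : ℕ) = 1 from rfl]
    exact Nat.mod_eq_of_lt (by omega)
  rw [h] at hv
  simp at hv

lemma sym2_succ_eq {v u : Fin (m+3)} (h : s(v, v+1) = s(u, u+1)) : v = u := by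
  rw [Sym2.eq_iff] at h
  rcases h with ⟨h1, _⟩ | ⟨h1, h2⟩
  · exact h1
  · exfalso
    have hu : u = u + 1 + 1 := by
      calc u = v + 1 := h2.symm
        _ = (u + 1) + 1 := by rw [h1]
    have h3 := congrArg (fun t => t - u) hu
    simp only [sub_self] at h3
    rw [show u + 1 + 1 - u = 2 by ring] at h3
    exact two_ne_zero' h3.symm

lemma val_sub_add {x y : Fin (m+3)} (hxy : x ≠ y) :
    (y - x).val + (x - y).val = m + 3 := by
  have h0 : ((y - x) + (x - y) : Fin (m+3)) = 0 := by ring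
  have hmod := congrArg Fin.val h0
  rw [Fin.val_add] at hmod
  simp only [Fin.val_zero] at hmod
  have hy : (y - x).val ≠ 0 := fun h =>
    (sub_ne_zero.mpr (Ne.symm hxy)) (Fin.ext (by rw [h]; rfl))
  have hx : (x - y).val ≠ 0 := fun h =>
    (sub_ne_zero.mpr hxy) (Fin.ext (by rw [h]; rfl))
  have ha := (y - x).isLt
  have hb := (x - y).isLt
  obtain ⟨k, hk⟩ := Nat.dvd_of_mod_eq_zero hmod
  match k, hk with
  | 0, hk => omega
  | 1, hk => omega
  | (k+2), hk =>
    exfalso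
    have hgt : (m+3) * 2 ≤ (m+3) * (k+2) := Nat.mul_le_mul_left _ (by omega)
    omega

lemma monitors_plus {x y : Fin (m+3)} {i : ℕ} (h2 : 2 * (y - x).val < m + 3)
    (hi : i < (y - x).val) :
    Monitors (cycleGraph (m+3)) x y s(x + (i : Fin (m+3)), x + (i : Fin (m+3)) + 1) := by
  have hxy : x ≠ y := by
    intro h
    rw [h, sub_self] at hi
    simp at hi
  have hle : (y - x).val ≤ (x - y).val := by
    have := val_sub_add hxy
    omega
  have hdist : (cycleGraph (m+3)).dist x y = (y - x).val := dist_eq_sub hle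
  obtain ⟨p, hp, hlen, _⟩ := exists_plusPath' x y
  refine ⟨⟨p, hp, by rw [hlen, hdist]⟩, ?_⟩
  intro q hq hql
  rw [hdist] at hql
  rcases path_dir q hq with hplus | hminus
  · exact (isPlus_spec q hplus).2 i (by rw [hql]; exact hi)
  · exfalso
    have h1 := (isPlus_spec q.reverse (isMinus_reverse q hminus)).1
    rw [Walk.length_reverse, hql] at h1
    have hyx : y = x + (((y - x).val : ℕ) : Fin (m+3)) := by
      rw [Fin.cast_val_eq_self]; ring
    have e1 : x - y = (((y - x).val : ℕ) : Fin (m+3)) := by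
      have := congrArg (fun t => t - y) h1
      simpa using this
    have e2 : y - x = (((y - x).val : ℕ) : Fin (m+3)) := by
      have := congrArg (fun t => t - x) hyx
      simpa using this
    have h0' : ((2 * (y - x).val : ℕ) : Fin (m+3)) = 0 := by
      push_cast
      rw [two_mul]
      nth_rewrite 1 [e2]
      rw [← e1]
      ring
    have := congrArg Fin.val h0'
    rw [Fin.val_cast_of_lt h2] at this
    rw [Fin.val_zero] at this
    omega

lemma edge_form {e : Sym2 (Fin (m+3))} (he : e ∈ (cycleGraph (m+3)).edgeSet) :
    ∃ w, e = s(w, w+1) := by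
  induction e using Sym2.ind with
  | _ u v =>
    rw [SimpleGraph.mem_edgeSet] at he
    rcases adj_iff.mp he with h | h
    · exact ⟨v, by rw [h, Sym2.eq_swap]⟩
    · exact ⟨u, by rw [h]⟩

lemma not_monitors_pair {x y : Fin (m+3)} (hle : (y - x).val ≤ (x - y).val) :
    ¬ Monitors (cycleGraph (m+3)) x y s(y, y+1) := by
  intro hmon
  obtain ⟨i, hi, hie⟩ := monitors_mem hle hmon
  have hv : y = x + (i : Fin (m+3)) := sym2_succ_eq hie
  have hyx : y = x + (((y - x).val : ℕ) : Fin (m+3)) := by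
    rw [Fin.cast_val_eq_self]; ring
  have hcast : ((i : ℕ) : Fin (m+3)) = (((y - x).val : ℕ) : Fin (m+3)) :=
    add_left_cancel (hv.symm.trans hyx)
  have := congrArg Fin.val hcast
  rw [Fin.val_cast_of_lt (by omega : i < m+3),
    Fin.val_cast_of_lt ((y - x).isLt)] at this
  omega

lemma helper3 {S : Set (Fin (m+3))} (hS : IsMEGSet (cycleGraph (m+3)) S)
    (x y : Fin (m+3)) (hsub : S ⊆ {x, y}) (hle : (y - x).val ≤ (x - y).val) : False := by
  have he : s(y, y+1) ∈ (cycleGraph (m+3)).edgeSet := adj_succ y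
  obtain ⟨a, ha, b, hb, hm⟩ := hS _ he
  have ha' := hsub ha
  have hb' := hsub hb
  simp only [Set.mem_insert_iff, Set.mem_singleton_iff] at ha' hb'
  rcases ha' with rfl | rfl <;> rcases hb' with rfl | rfl
  · exact not_monitors_self _ _ _ hm
  · exact not_monitors_pair hle hm
  · exact not_monitors_pair hle (monitors_symm hm)
  · exact not_monitors_self _ _ _ hm

lemma lower3 {S : Set (Fin (m+3))} (hS : IsMEGSet (cycleGraph (m+3)) S) : 3 ≤ S.ncard := by
  by_contra hlt
  push_neg at hlt
  have hpair : ∃ x y : Fin (m+3), S ⊆ {x, y} := by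
    interval_cases h : S.ncard
    · exact ⟨0, 0, by rw [Set.ncard_eq_zero (Set.toFinite S) |>.mp h]; simp⟩
    · obtain ⟨a, rfl⟩ := Set.ncard_eq_one.mp h
      exact ⟨a, a, by simp⟩
    · obtain ⟨a, b, _, rfl⟩ := Set.ncard_eq_two.mp h
      exact ⟨a, b, subset_rfl⟩
  obtain ⟨x, y, hsub⟩ := hpair
  rcases le_total (y - x).val ((x - y).val) with hle | hle
  · exact helper3 hS x y hsub hle
  · exact helper3 hS y x (by rwa [Set.pair_comm]) hle

lemma cast_ne_cast {a b : ℕ} (ha : a < m+3) (hb : b < m+3) (hne : a ≠ b) :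
    ((a : ℕ) : Fin (m+3)) ≠ ((b : ℕ) : Fin (m+3)) := by
  intro h
  have := congrArg Fin.val h
  rw [Fin.val_cast_of_lt ha, Fin.val_cast_of_lt hb] at this
  exact hne this

lemma upper3 (hbig : 2 * ((m+3+2)/3) < m+3) :
    ∃ S : Set (Fin (m+3)), IsMEGSet (cycleGraph (m+3)) S ∧ S.ncard = 3 := by
  set n := m + 3 with hn
  set d1 := (n+2)/3 with hd1
  set d2 := (n+1)/3 with hd2
  set d3 := n/3 with hd3
  have hsum : d1 + d2 + d3 = n := by omega
  have h3 : 1 ≤ d3 := by omega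
  have h32 : d3 ≤ d2 := by omega
  have h21 : d2 ≤ d1 := by omega
  have h2d1 : 2 * d1 < n := hbig
  refine ⟨{(0 : Fin (m+3)), ((d1 : ℕ) : Fin (m+3)), ((d1 + d2 : ℕ) : Fin (m+3))}, ?_, ?_⟩
  · intro e he
    obtain ⟨w, rfl⟩ := edge_form he
    rcases lt_or_ge w.val d1 with hc | hc
    · refine ⟨0, by simp, ((d1 : ℕ) : Fin (m+3)), by simp, ?_⟩
      have hsub : (((d1 : ℕ) : Fin (m+3)) - 0).val = d1 := by
        rw [sub_zero, Fin.val_cast_of_lt (by omega)]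
      have hw : (0 : Fin (m+3)) + ((w.val : ℕ) : Fin (m+3)) = w := by
        rw [Fin.cast_val_eq_self, zero_add]
      have := monitors_plus (x := (0 : Fin (m+3))) (y := ((d1 : ℕ) : Fin (m+3))) (i := w.val)
        (by rw [hsub]; omega) (by rw [hsub]; omega)
      rwa [hw] at this
    · rcases lt_or_ge w.val (d1 + d2) with hc2 | hc2
      · refine ⟨((d1 : ℕ) : Fin (m+3)), by simp, ((d1 + d2 : ℕ) : Fin (m+3)), by simp, ?_⟩
        have hsub : (((d1 + d2 : ℕ) : Fin (m+3)) - ((d1 : ℕ) : Fin (m+3))).val = d2 := by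
          rw [show ((d1 + d2 : ℕ) : Fin (m+3)) - ((d1 : ℕ) : Fin (m+3)) = ((d2 : ℕ) : Fin (m+3))
            by push_cast; ring]
          rw [Fin.val_cast_of_lt (by omega)]
        have hw : ((d1 : ℕ) : Fin (m+3)) + ((w.val - d1 : ℕ) : Fin (m+3)) = w := by
          rw [← Nat.cast_add, show d1 + (w.val - d1) = w.val by omega, Fin.cast_val_eq_self]
        have := monitors_plus (x := ((d1 : ℕ) : Fin (m+3))) (y := ((d1 + d2 : ℕ) : Fin (m+3)))
          (i := w.val - d1) (by rw [hsub]; omega) (by rw [hsub]; omega)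
        rwa [hw] at this
      · have hwlt := w.isLt
        refine ⟨((d1 + d2 : ℕ) : Fin (m+3)), by simp, 0, by simp, ?_⟩
        have hkey : (0 : Fin (m+3)) - ((d1 + d2 : ℕ) : Fin (m+3)) = ((d3 : ℕ) : Fin (m+3)) := by
          have hz : ((d1 + d2 : ℕ) : Fin (m+3)) + ((d3 : ℕ) : Fin (m+3)) = 0 := by
            rw [← Nat.cast_add, show d1 + d2 + d3 = m + 3 from hsum, Fin.natCast_self]
          rw [sub_eq_iff_eq_add]
          rw [← hz]; ring
        have hsub : ((0 : Fin (m+3)) - ((d1 + d2 : ℕ) : Fin (m+3))).val = d3 := by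
          rw [hkey, Fin.val_cast_of_lt (by omega)]
        have hw : ((d1 + d2 : ℕ) : Fin (m+3)) + ((w.val - (d1 + d2) : ℕ) : Fin (m+3)) = w := by
          rw [← Nat.cast_add, show d1 + d2 + (w.val - (d1 + d2)) = w.val by omega,
            Fin.cast_val_eq_self]
        have := monitors_plus (x := ((d1 + d2 : ℕ) : Fin (m+3))) (y := (0 : Fin (m+3)))
          (i := w.val - (d1 + d2)) (by rw [hsub]; omega) (by rw [hsub]; omega)
        rwa [hw] at this
  · rw [Set.ncard_eq_three]
    refine ⟨_, _, _, ?_, ?_, ?_, rfl⟩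
    · have := cast_ne_cast (m := m) (a := 0) (b := d1) (by omega) (by omega) (by omega)
      simpa using this
    · have := cast_ne_cast (m := m) (a := 0) (b := d1 + d2) (by omega) (by omega) (by omega)
      simpa using this
    · exact cast_ne_cast (by omega) (by omega) (by omega)

theorem megNum_cycle_eq_three (hbig : 2 * ((m+3+2)/3) < m+3) :
    megNum (cycleGraph (m+3)) = 3 := by
  obtain ⟨S, hS, hcard⟩ := upper3 hbig
  refine le_antisymm (Nat.sInf_le ⟨S, hS, hcard⟩) ?_
  refine le_csInf ⟨3, S, hS, hcard⟩ ?_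
  rintro k ⟨T, hT, rfl⟩
  exact lower3 hT

lemma helperC4 (a b v : Fin 4) (hav : a ≠ v) (hab : a ≠ b)
    (hle : (b - a).val ≤ (a - b).val)
    (hm : Monitors (cycleGraph 4) a b s(v, v+1)) : False := by
  have hsum : (b - a).val + (a - b).val = 4 := val_sub_add (m := 1) hab
  have hne : (b - a).val ≠ 0 := fun h =>
    (sub_ne_zero.mpr (Ne.symm hab)) (Fin.ext (by rw [h]; rfl))
  have hd2 : (b - a).val = 1 ∨ (b - a).val = 2 := by omega
  obtain ⟨i, hi, hie⟩ := monitors_mem (m := 1) hle hm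
  have hv : v = a + (i : Fin 4) := sym2_succ_eq (m := 1) hie
  rcases hd2 with hd | hd
  · rw [hd] at hi
    interval_cases i
    simp at hv
    exact hav hv.symm
  · have hle' : (a - b).val ≤ (b - a).val := by omega
    obtain ⟨j, hj, hje⟩ := monitors_mem (m := 1) hle' (monitors_symm hm)
    have hw : v = b + (j : Fin 4) := sym2_succ_eq (m := 1) hje
    have hi' : i < (b - a).val := hi
    have hj' : j < (a - b).val := hj
    have hI : i < 2 := by omega
    have hJ : j < 2 := by omega
    have hba : b = a + ((2 : ℕ) : Fin 4) := by
      have h1 : b - a = ((2 : ℕ) : Fin 4) := by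
        rw [← hd, Fin.cast_val_eq_self]
      rw [← h1]; ring
    have hcast : ((i : ℕ) : Fin 4) = ((2 + j : ℕ) : Fin 4) := by
      apply add_left_cancel (a := a)
      rw [← hv, Nat.cast_add, ← add_assoc, ← hba, hw]
    exact cast_ne_cast (m := 1) (a := i) (b := 2 + j) (by omega) (by omega) (by omega) hcast


lemma lowerC4 {S : Set (Fin 4)} (hS : IsMEGSet (cycleGraph 4) S) : 4 ≤ S.ncard := by
  by_contra hlt
  push_neg at hlt
  have hne : S ≠ Set.univ := by
    intro h
    rw [h, Set.ncard_univ] at hlt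
    simp at hlt
  obtain ⟨v, hv⟩ := (Set.ne_univ_iff_exists_notMem S).mp hne
  have he : s(v, v+1) ∈ (cycleGraph 4).edgeSet := adj_succ (m := 1) v
  obtain ⟨a, ha, b, hb, hm⟩ := hS _ he
  have hav : a ≠ v := fun h => hv (h ▸ ha)
  have hbv : b ≠ v := fun h => hv (h ▸ hb)
  by_cases hab : a = b
  · subst hab
    exact not_monitors_self _ _ _ hm
  · rcases le_total (b - a).val ((a - b).val) with hle | hle
    · exact helperC4 a b v hav hab hle hm
    · exact helperC4 b a v hbv (Ne.symm hab) hle (monitors_symm hm)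

lemma upperC4 : ∃ S : Set (Fin 4), IsMEGSet (cycleGraph 4) S ∧ S.ncard = 4 := by
  refine ⟨Set.univ, ?_, by simp [Set.ncard_univ]⟩
  intro e he
  obtain ⟨w, rfl⟩ := edge_form (m := 1) he
  refine ⟨w, Set.mem_univ _, w + 1, Set.mem_univ _, ?_⟩
  have hsub : ((w + 1) - w : Fin 4).val = 1 := by
    rw [show (w + 1) - w = (1 : Fin 4) by ring]
    rfl
  have := monitors_plus (m := 1) (x := w) (y := w + 1) (i := 0)
    (by rw [hsub]; omega) (by rw [hsub]; omega)
  simpa using this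

theorem megNum_C4 : megNum (cycleGraph 4) = 4 := by
  obtain ⟨S, hS, hcard⟩ := upperC4
  refine le_antisymm (Nat.sInf_le ⟨S, hS, hcard⟩) ?_
  refine le_csInf ⟨4, S, hS, hcard⟩ ?_
  rintro k ⟨T, hT, rfl⟩
  exact lowerC4 hT

end MEGAux

theorem cycleGraph_MEG (n : ℕ) (hn : n = 3 ∨ 5 ≤ n) :
    megNum (cycleGraph n) = 3 ∧ megNum (cycleGraph 4) = 4 := by
  constructor
  · obtain ⟨m, rfl⟩ : ∃ m, n = m + 3 := ⟨n - 3, by omega⟩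
    exact MEGAux.megNum_cycle_eq_three (by omega)
  · exact MEGAux.megNum_C4
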